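/- arXiv:1810.06987 — 4 statements merged into one kernel-verified Lean document; each statement's English description precedes it below -/
import Mathlib

section
/- The number of partitions of a positive integer n ≥ 4 in which every part is at least 3 equals p(n) - p(n-1) - p(n-2) + p(n-3), where p denotes the partition counting function. -/
/-- The partition counting function `p`. -/
def partitionCount (n : ℕ) : ℕ := Fintype.card (Nat.Partition n)

/-- Removing a part `1` gives a bijection with partitions of `m`. -/
def eraseOneEquiv (m : ℕ) :
    {P : Nat.Partition (m + 1) // 1 ∈ P.parts} ≃ Nat.Partition m where
  toFun P :=
    { parts := P.1.parts.erase 1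
      parts_pos := fun hi => P.1.parts_pos (Multiset.mem_of_mem_erase hi)
      parts_sum := by
        have h : (1 : ℕ) + (P.1.parts.erase 1).sum = m + 1 := by
          rw [← Multiset.sum_cons, Multiset.cons_erase P.2, P.1.parts_sum]
        omega }
  invFun Q :=
    ⟨{ parts := 1 ::ₘ Q.parts
       parts_pos := fun hi => by
         rcases Multiset.mem_cons.mp hi with h | h
         · omega
         · exact Q.parts_pos h
       parts_sum := by rw [Multiset.sum_cons, Q.parts_sum, Nat.add_comm] },
     Multiset.mem_cons_self 1 _⟩
  left_inv P := by
    apply Subtype.ext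
    ext1
    exact Multiset.cons_erase P.2
  right_inv Q := by
    ext1
    exact Multiset.erase_cons_head 1 Q.parts

/-- Removing a part `2` from partitions with no `1`s. -/
def eraseTwoEquiv (m : ℕ) :
    {P : Nat.Partition (m + 2) // 1 ∉ P.parts ∧ 2 ∈ P.parts} ≃
      {Q : Nat.Partition m // 1 ∉ Q.parts} where
  toFun P :=
    ⟨{ parts := P.1.parts.erase 2
       parts_pos := fun hi => P.1.parts_pos (Multiset.mem_of_mem_erase hi)
       parts_sum := by
         have h : (2 : ℕ) + (P.1.parts.erase 2).sum = m + 2 := by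
           rw [← Multiset.sum_cons, Multiset.cons_erase P.2.2, P.1.parts_sum]
         omega },
     fun h => P.2.1 (Multiset.mem_of_mem_erase h)⟩
  invFun Q :=
    ⟨{ parts := 2 ::ₘ Q.1.parts
       parts_pos := fun hi => by
         rcases Multiset.mem_cons.mp hi with h | h
         · omega
         · exact Q.1.parts_pos h
       parts_sum := by rw [Multiset.sum_cons, Q.1.parts_sum, Nat.add_comm] },
     ⟨fun h => by
        rcases Multiset.mem_cons.mp h with h | h
        · omega
        · exact Q.2 h,
      Multiset.mem_cons_self 2 _⟩⟩
  left_inv P := by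
    apply Subtype.ext
    ext1
    exact Multiset.cons_erase P.2.2
  right_inv Q := by
    apply Subtype.ext
    ext1
    exact Multiset.erase_cons_head 2 Q.1.parts

lemma card_split (n : ℕ) (p q : Nat.Partition n → Prop) [DecidablePred p] [DecidablePred q] :
    Fintype.card {P : Nat.Partition n // p P ∧ q P}
      + Fintype.card {P : Nat.Partition n // p P ∧ ¬ q P}
      = Fintype.card {P : Nat.Partition n // p P} := by
  simp only [Fintype.card_subtype]
  rw [← Finset.filter_filter, ← Finset.filter_filter]
  exact Finset.card_filter_add_card_filter_not (fun P => q P)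

lemma card_one_mem (m : ℕ) :
    Fintype.card {P : Nat.Partition (m + 1) // 1 ∈ P.parts} = partitionCount m :=
  Fintype.card_congr (eraseOneEquiv m)

lemma card_pnp {α : Type*} [Fintype α] (p : α → Prop) [DecidablePred p]
    [Fintype {x // p x}] [Fintype {x // ¬ p x}] :
    Fintype.card {x // p x} + Fintype.card {x // ¬ p x} = Fintype.card α := by
  rw [← Fintype.card_sum]
  exact Fintype.card_congr (Equiv.sumCompl p)

set_option maxHeartbeats 1000000 in
theorem stmt_3 (n : ℕ) (hn : 4 ≤ n) :
    (Fintype.card {P : Nat.Partition n // ∀ i ∈ P.parts, 3 ≤ i} : ℤ) =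
      (partitionCount n : ℤ) - (partitionCount (n - 1) : ℤ)
        - (partitionCount (n - 2) : ℤ) + (partitionCount (n - 3) : ℤ) := by
  obtain ⟨k, rfl⟩ : ∃ k, n = k + 4 := ⟨n - 4, by omega⟩
  have hD : Fintype.card {P : Nat.Partition (k + 4) // ∀ i ∈ P.parts, 3 ≤ i}
      = Fintype.card {P : Nat.Partition (k + 4) // 1 ∉ P.parts ∧ ¬ 2 ∈ P.parts} := by
    apply Fintype.card_congr
    apply Equiv.subtypeEquivRight
    intro P
    constructor
    · intro h
      exact ⟨fun h1 => by have := h 1 h1; omega, fun h2 => by have := h 2 h2; omega⟩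
    · intro ⟨h1, h2⟩ i hi
      have := P.parts_pos hi
      rcases Nat.lt_or_ge i 3 with hlt | hge
      · interval_cases i
        · exact absurd hi h1
        · exact absurd hi h2
      · exact hge
  have h1a : Fintype.card {P : Nat.Partition (k + 4) // 1 ∈ P.parts}
      + Fintype.card {P : Nat.Partition (k + 4) // 1 ∉ P.parts}
      = partitionCount (k + 4) := by unfold partitionCount; apply card_pnp
  have h1b : Fintype.card {P : Nat.Partition (k + 2) // 1 ∈ P.parts}
      + Fintype.card {P : Nat.Partition (k + 2) // 1 ∉ P.parts}
      = partitionCount (k + 2) := by unfold partitionCount; apply card_pnp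
  have h2 : Fintype.card {P : Nat.Partition (k + 4) // 1 ∉ P.parts ∧ 2 ∈ P.parts}
      + Fintype.card {P : Nat.Partition (k + 4) // 1 ∉ P.parts ∧ ¬ 2 ∈ P.parts}
      = Fintype.card {P : Nat.Partition (k + 4) // 1 ∉ P.parts} := by
    apply card_split
  have h3 : Fintype.card {P : Nat.Partition (k + 4) // 1 ∈ P.parts} = partitionCount (k + 3) := by
    apply card_one_mem
  have h4 : Fintype.card {P : Nat.Partition (k + 2) // 1 ∈ P.parts} = partitionCount (k + 1) := by
    apply card_one_mem
  have h5 : Fintype.card {P : Nat.Partition (k + 4) // 1 ∉ P.parts ∧ 2 ∈ P.parts}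
      = Fintype.card {P : Nat.Partition (k + 2) // 1 ∉ P.parts} := by
    apply Fintype.card_congr (eraseTwoEquiv (k + 2))
  have e1 : k + 4 - 1 = k + 3 := by omega
  have e2 : k + 4 - 2 = k + 2 := by omega
  have e3 : k + 4 - 3 = k + 1 := by omega
  rw [hD, e1, e2, e3]
  omega
end

section
/- Let Δ be the second-order differential operator on R = Q[Q_1, Q_2, ...] given by 2Δ = Σ_{k,ℓ≥0} (C(k+ℓ, k) Q_{k+ℓ} - Q_k Q_ℓ) ∂²/∂Q_{k+1}∂Q_{ℓ+1} - Σ_{k≥0} Q_k ∂/∂Q_{k+2} (with Q_0 = 1). Then for every f in the polynomial subring Q[Q_1, Q_2] and every g in R, one has Δ(fg) = Δ(f)·g + (∂f/∂Q_2)·(E g - Q_1 ∂g) + f·Δ(g), where E is the weight operator and ∂ is the derivation with ∂Q_1 = 1, ∂Q_k = Q_{k-1}. -/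
open MvPolynomial Function

/-- The Bloch–Okounkov ring `R = ℚ[Q₁, Q₂, Q₃, …]`, with `Q k = X k` for `k : ℕ+`. -/
noncomputable abbrev BO : Type := MvPolynomial ℕ+ ℚ

/-- The index `k + 1` as an element of `ℕ+`. -/
def v (k : ℕ) : ℕ+ := ⟨k + 1, Nat.succ_pos k⟩

/-- `Q_k` for `k : ℕ`, with the convention `Q₀ = 1`. -/
noncomputable def Qv (k : ℕ) : BO := if h : 0 < k then X ⟨k, h⟩ else 1

lemma pderiv_pderiv_comm (i j : ℕ+) (f : BO) :
    pderiv i (pderiv j f) = pderiv j (pderiv i f) := by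
  induction f using MvPolynomial.induction_on with
  | C a => simp
  | add p q hp hq => simp [hp, hq]
  | mul_X p n ih =>
      classical
      simp only [pderiv_mul, pderiv_X, map_add, ih, Pi.single_apply]
      split_ifs <;> simp <;> ring

lemma v_injective : Function.Injective v := by
  intro a b h
  have : a + 1 = b + 1 := congrArg Subtype.val h
  omega

lemma Sv_finite (f : BO) : {k : ℕ | pderiv (v k) f ≠ 0}.Finite := by
  apply Set.Finite.subset ((f.vars.finite_toSet).preimage (v_injective.injOn))
  intro k hk
  by_contra h
  exact hk (pderiv_eq_zero_of_notMem_vars h)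

lemma supp2 (F : ℕ × ℕ → BO) (f g : BO)
    (h1 : ∀ p : ℕ × ℕ, pderiv (v p.1) f = 0 → F p = 0)
    (h2 : ∀ p : ℕ × ℕ, pderiv (v p.2) g = 0 → F p = 0) :
    (Function.support F).Finite := by
  apply Set.Finite.subset ((Sv_finite f).prod (Sv_finite g))
  intro p hp
  constructor
  · by_contra h; exact hp (h1 p (not_not.mp (fun hh => h hh)))
  · by_contra h; exact hp (h2 p (not_not.mp (fun hh => h hh)))

lemma supp1 (F : ℕ → BO) (f : BO) (m : ℕ → ℕ) (hm : Function.Injective m)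
    (h : ∀ k : ℕ, pderiv (v (m k)) f = 0 → F k = 0) :
    (Function.support F).Finite := by
  apply Set.Finite.subset ((Sv_finite f).preimage hm.injOn)
  intro k hk
  by_contra hc
  exact hk (h k (not_not.mp hc))

noncomputable def cc (p : ℕ × ℕ) : BO :=
  (((p.1 + p.2).choose p.1 : ℚ) • Qv (p.1 + p.2)) - Qv p.1 * Qv p.2

/-- The derivation `∂` determined by `∂Q₁ = 1` and `∂Q_k = Q_{k-1}` for `k ≥ 2`. -/
noncomputable def del : Derivation ℚ BO BO :=
  mkDerivation ℚ (fun k => if k = 1 then 1 else X (k - 1))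

/-- The weight operator `E`, the derivation with `E(Q_k) = k · Q_k`. -/
noncomputable def wt : Derivation ℚ BO BO :=
  mkDerivation ℚ (fun k => ((k : ℕ) : ℚ) • X k)

/-- The operator `Δ`, defined by
`2Δ = Σ_{k,ℓ≥0} (C(k+ℓ,k) Q_{k+ℓ} - Q_k Q_ℓ) ∂²/∂Q_{k+1}∂Q_{ℓ+1} - Σ_{k≥0} Q_k ∂/∂Q_{k+2}`,
with `Q₀ := 1`. -/
noncomputable def Del (f : BO) : BO :=
  (1 / 2 : ℚ) •
    ((∑ᶠ p : ℕ × ℕ,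
        ((((p.1 + p.2).choose p.1 : ℚ) • Qv (p.1 + p.2)) - Qv p.1 * Qv p.2) *
          pderiv (v p.1) (pderiv (v p.2) f))
      - ∑ᶠ k : ℕ, Qv k * pderiv (v (k + 1)) f)

lemma Del_eq (f : BO) : Del f =
    (1 / 2 : ℚ) • ((∑ᶠ p : ℕ × ℕ, cc p * pderiv (v p.1) (pderiv (v p.2) f))
      - ∑ᶠ k : ℕ, Qv k * pderiv (v (k + 1)) f) := rfl

lemma cc_symm (p : ℕ × ℕ) : cc p.swap = cc p := by
  simp only [cc, Prod.fst_swap, Prod.snd_swap, Nat.add_comm p.2 p.1]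
  rw [Nat.choose_symm_add, mul_comm]

lemma finsum_add4 {ι M : Type*} [AddCommMonoid M] (T1 T2 T3 T4 : ι → M)
    (h1 : (support T1).Finite) (h2 : (support T2).Finite)
    (h3 : (support T3).Finite) (h4 : (support T4).Finite) :
    ∑ᶠ i, (T1 i + T2 i + T3 i + T4 i)
      = (∑ᶠ i, T1 i) + (∑ᶠ i, T2 i) + (∑ᶠ i, T3 i) + (∑ᶠ i, T4 i) := by
  rw [finsum_add_distrib (((h1.union h2).union h3).subset
        ((support_add _ _).trans (Set.union_subset_union_left _ (support_add _ _)))) h4,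
      finsum_add_distrib ((h1.union h2).subset (support_add _ _)) h3,
      finsum_add_distrib h1 h2]

lemma Del_mul (f g : BO) : Del (f * g) = Del f * g + f * Del g
    + ∑ᶠ p : ℕ × ℕ, cc p * (pderiv (v p.1) f * pderiv (v p.2) g) := by
  have hP1 : (support fun p : ℕ × ℕ => cc p * pderiv (v p.1) (pderiv (v p.2) f)).Finite := by
    apply supp2 _ f f
    · intro p hp; rw [pderiv_pderiv_comm, hp]; simp
    · intro p hp; rw [hp]; simp
  have hP2 : (support fun p : ℕ × ℕ => cc p * pderiv (v p.1) (pderiv (v p.2) g)).Finite := by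
    apply supp2 _ g g
    · intro p hp; rw [pderiv_pderiv_comm, hp]; simp
    · intro p hp; rw [hp]; simp
  have hT1 : (support fun p : ℕ × ℕ => cc p * pderiv (v p.1) (pderiv (v p.2) f) * g).Finite := by
    apply supp2 _ f f
    · intro p hp; rw [pderiv_pderiv_comm, hp]; simp
    · intro p hp; rw [hp]; simp
  have hT2 : (support fun p : ℕ × ℕ => cc p * (pderiv (v p.2) f * pderiv (v p.1) g)).Finite := by
    apply supp2 _ g f
    · intro p hp; rw [hp]; simp
    · intro p hp; rw [hp]; simp
  have hT3 : (support fun p : ℕ × ℕ => cc p * (pderiv (v p.1) f * pderiv (v p.2) g)).Finite := by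
    apply supp2 _ f g
    · intro p hp; rw [hp]; simp
    · intro p hp; rw [hp]; simp
  have hT4 : (support fun p : ℕ × ℕ => f * (cc p * pderiv (v p.1) (pderiv (v p.2) g))).Finite := by
    apply supp2 _ g g
    · intro p hp; rw [pderiv_pderiv_comm, hp]; simp
    · intro p hp; rw [hp]; simp
  have hQ1 : (support fun k : ℕ => Qv k * pderiv (v (k + 1)) f).Finite := by
    apply supp1 _ f (fun k => k + 1) (add_left_injective 1)
    intro k hk; rw [hk]; simp
  have hQ2 : (support fun k : ℕ => Qv k * pderiv (v (k + 1)) g).Finite := by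
    apply supp1 _ g (fun k => k + 1) (add_left_injective 1)
    intro k hk; rw [hk]; simp
  have e2 : (∑ᶠ p : ℕ × ℕ, cc p * pderiv (v p.1) (pderiv (v p.2) (f * g)))
      = (∑ᶠ p : ℕ × ℕ, cc p * pderiv (v p.1) (pderiv (v p.2) f)) * g
        + (∑ᶠ p : ℕ × ℕ, cc p * (pderiv (v p.1) f * pderiv (v p.2) g))
        + (∑ᶠ p : ℕ × ℕ, cc p * (pderiv (v p.1) f * pderiv (v p.2) g))
        + f * (∑ᶠ p : ℕ × ℕ, cc p * pderiv (v p.1) (pderiv (v p.2) g)) := by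
    have step1 : (∑ᶠ p : ℕ × ℕ, cc p * pderiv (v p.1) (pderiv (v p.2) (f * g)))
        = ∑ᶠ p : ℕ × ℕ, (cc p * pderiv (v p.1) (pderiv (v p.2) f) * g
            + cc p * (pderiv (v p.2) f * pderiv (v p.1) g)
            + cc p * (pderiv (v p.1) f * pderiv (v p.2) g)
            + f * (cc p * pderiv (v p.1) (pderiv (v p.2) g))) := by
      apply finsum_congr
      intro p
      rw [pderiv_mul, map_add, pderiv_mul, pderiv_mul]
      ring
    rw [step1, finsum_add4 _ _ _ _ hT1 hT2 hT3 hT4,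
      finsum_mul (fun p : ℕ × ℕ => cc p * pderiv (v p.1) (pderiv (v p.2) f)) g,
      mul_finsum (fun p : ℕ × ℕ => cc p * pderiv (v p.1) (pderiv (v p.2) g)) f]
    refine congrArg (· + _) ?_
    refine congrArg (· + _) ?_
    refine congrArg (_ + ·) ?_
    conv_rhs => rw [← finsum_comp_equiv (Equiv.prodComm ℕ ℕ)]
    apply finsum_congr
    intro p
    simp only [Equiv.prodComm_apply, Prod.fst_swap, Prod.snd_swap, cc_symm]
  have e1 : (∑ᶠ k : ℕ, Qv k * pderiv (v (k + 1)) (f * g))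
      = (∑ᶠ k : ℕ, Qv k * pderiv (v (k + 1)) f) * g
        + f * (∑ᶠ k : ℕ, Qv k * pderiv (v (k + 1)) g) := by
    have step1 : (∑ᶠ k : ℕ, Qv k * pderiv (v (k + 1)) (f * g))
        = ∑ᶠ k : ℕ, (Qv k * pderiv (v (k + 1)) f * g + f * (Qv k * pderiv (v (k + 1)) g)) := by
      apply finsum_congr
      intro k
      rw [pderiv_mul]
      ring
    rw [step1, finsum_add_distrib, finsum_mul _ _, mul_finsum _ _]
    · apply supp1 _ f (fun k => k + 1) (add_left_injective 1)
      intro k hk; rw [hk]; simp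
    · apply supp1 _ g (fun k => k + 1) (add_left_injective 1)
      intro k hk; rw [hk]; simp
  rw [Del_eq, Del_eq, Del_eq, e2, e1]
  have h2 : (2 : BO) * (C (1/2 : ℚ) : BO) = 1 := by
    rw [← map_ofNat (C : ℚ →+* BO) 2, ← map_mul, ← map_one (C : ℚ →+* BO)]
    norm_num
  simp only [smul_eq_C_mul]
  linear_combination (∑ᶠ p : ℕ × ℕ, cc p * (pderiv (v p.1) f * pderiv (v p.2) g)) * h2

lemma pderiv_adjoin {f : BO} (hf : f ∈ Algebra.adjoin ℚ ({X (v 0), X (v 1)} : Set BO))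
    (k : ℕ) (hk : 2 ≤ k) : pderiv (v k) f = 0 := by
  induction hf using Algebra.adjoin_induction with
  | mem x hx =>
      classical
      rcases hx with h | h <;> subst h <;>
        · rw [pderiv_X]
          rw [Pi.single_apply, if_neg]
          intro h
          have h2 := v_injective h
          omega
  | algebraMap r => simp [MvPolynomial.algebraMap_eq]
  | add x y hx hy ihx ihy => simp [ihx, ihy]
  | mul x y hx hy ihx ihy => simp [pderiv_mul, ihx, ihy]

lemma cc_zero_left (l : ℕ) : cc (0, l) = 0 := by
  simp [cc, Qv]

lemma Qv_coe (n : ℕ+) : Qv (n : ℕ) = X n := by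
  rw [Qv, dif_pos n.pos]
  exact congrArg X (Subtype.ext rfl)

lemma Qv_one : Qv 1 = X (v 0) := by
  rw [Qv, dif_pos Nat.one_pos]
  exact congrArg X (Subtype.ext rfl)

lemma Qv_pred (n : ℕ+) : Qv ((n : ℕ) - 1) = if n = 1 then 1 else X (n - 1) := by
  by_cases h : n = 1
  · subst h
    rw [if_pos rfl]
    rfl
  · rw [if_neg h]
    have h1 : (1 : ℕ+) < n := lt_of_le_of_ne n.one_le (Ne.symm h)
    have h2 : 1 < (n : ℕ) := h1
    rw [Qv, dif_pos (by omega : 0 < (n : ℕ) - 1)]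
    refine congrArg X (PNat.coe_injective ?_)
    simp [PNat.sub_coe, h1]

lemma key_val (n : ℕ+) : cc (1, (n : ℕ) - 1)
    = ((n : ℕ) : ℚ) • X n - X (v 0) * (if n = 1 then 1 else X (n - 1)) := by
  have h1 : 1 + ((n : ℕ) - 1) = (n : ℕ) := by
    have := n.pos
    omega
  simp only [cc, h1, Nat.choose_one_right, Qv_coe, Qv_pred, Qv_one]

lemma v_eq_iff (l : ℕ) (n : ℕ+) : v l = n ↔ l = (n : ℕ) - 1 := by
  constructor
  · intro h
    have h1 : l + 1 = (n : ℕ) := congrArg Subtype.val h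
    omega
  · intro h
    apply Subtype.ext
    show l + 1 = (n : ℕ)
    have := n.pos
    omega

lemma key_supp (h : BO) : (support fun l : ℕ => cc (1, l) * pderiv (v l) h).Finite := by
  apply supp1 _ h (fun k => k) (fun a b hab => hab)
  intro k hk
  rw [hk, mul_zero]

-- the key derivation identity
lemma key (g : BO) :
    (∑ᶠ l : ℕ, cc (1, l) * pderiv (v l) g) = wt g - X (v 0) * del g := by
  induction g using MvPolynomial.induction_on with
  | C a =>
      rw [show ((C a : BO)) = algebraMap ℚ BO a from rfl]
      rw [Derivation.map_algebraMap, Derivation.map_algebraMap]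
      rw [finsum_eq_zero_of_forall_eq_zero]
      · simp
      · intro l
        simp [MvPolynomial.algebraMap_eq]
  | add p q hp hq =>
      have e : (fun l : ℕ => cc (1, l) * pderiv (v l) (p + q))
          = fun l => cc (1, l) * pderiv (v l) p + cc (1, l) * pderiv (v l) q := by
        funext l
        rw [map_add]
        ring
      rw [e, finsum_add_distrib (key_supp p) (key_supp q), hp, hq, map_add, map_add]
      ring
  | mul_X p n ih =>
      classical
      have step : (fun l : ℕ => cc (1, l) * pderiv (v l) (p * X n))
          = fun l => cc (1, l) * pderiv (v l) p * X n
              + (if l = (n : ℕ) - 1 then cc (1, l) * p else 0) := by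
        funext l
        rw [pderiv_mul, pderiv_X, Pi.single_apply]
        by_cases hln : l = (n : ℕ) - 1
        · rw [if_pos hln, if_pos ((v_eq_iff l n).mpr hln).symm]
          ring
        · rw [if_neg hln, if_neg (fun hh => hln ((v_eq_iff l n).mp hh.symm))]
          ring
      have hfin1 : (support fun l : ℕ => cc (1, l) * pderiv (v l) p * X n).Finite := by
        apply supp1 _ p (fun k => k) (fun a b hab => hab)
        intro k hk
        rw [hk, mul_zero, zero_mul]
      have hfin2 : (support fun l : ℕ =>
          (if l = (n : ℕ) - 1 then cc (1, l) * p else 0 : BO)).Finite := by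
        apply Set.Finite.subset (Set.finite_singleton ((n : ℕ) - 1))
        intro l hl
        simp only [Function.mem_support] at hl
        by_contra hc
        exact hl (if_neg (by simpa using hc))
      rw [step, finsum_add_distrib hfin1 hfin2, ← finsum_mul (fun l : ℕ => cc (1, l) * pderiv (v l) p) (X n), ih,
          finsum_eq_single _ ((n : ℕ) - 1) (fun x hx => by rw [if_neg hx]),
          if_pos rfl, key_val]
      rw [Derivation.leibniz, Derivation.leibniz, smul_eq_mul, smul_eq_mul,
          smul_eq_mul, smul_eq_mul,
          show (wt (X n) : BO) = ((n : ℕ) : ℚ) • X n from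
            MvPolynomial.mkDerivation_X ℚ (fun k : ℕ+ => ((k : ℕ) : ℚ) • X k) n,
          show (del (X n) : BO) = (if n = 1 then 1 else X (n - 1)) from
            MvPolynomial.mkDerivation_X ℚ (fun k : ℕ+ => if k = 1 then 1 else X (k - 1)) n]
      ring

theorem stmt_9 (f g : BO) (hf : f ∈ Algebra.adjoin ℚ ({X (v 0), X (v 1)} : Set BO)) :
    Del (f * g) =
      Del f * g + pderiv (v 1) f * (wt g - X (v 0) * del g) + f * Del g := by
  have hvan := pderiv_adjoin hf
  have e : (fun p : ℕ × ℕ => cc p * (pderiv (v p.1) f * pderiv (v p.2) g))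
      = fun p : ℕ × ℕ =>
          if p.1 = 1 then pderiv (v 1) f * (cc (1, p.2) * pderiv (v p.2) g) else 0 := by
    funext p
    obtain ⟨k, l⟩ := p
    match k with
    | 0 => rw [cc_zero_left, if_neg (by norm_num), zero_mul]
    | 1 =>
        rw [if_pos rfl]
        ring
    | (m + 2) =>
        rw [if_neg (by omega), hvan (m + 2) (by omega), zero_mul, mul_zero]
  have hG : (Function.support fun p : ℕ × ℕ =>
      (if p.1 = 1 then pderiv (v 1) f * (cc (1, p.2) * pderiv (v p.2) g) else 0 : BO))
      ⊆ Set.range (fun l : ℕ => ((1 : ℕ), l)) := by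
    intro p hp
    simp only [Function.mem_support] at hp
    by_cases h1 : p.1 = 1
    · exact ⟨p.2, by rw [Prod.ext_iff]; exact ⟨h1.symm, rfl⟩⟩
    · exact absurd (if_neg h1) hp
  have einj : Function.Injective (fun l : ℕ => ((1 : ℕ), l)) := by
    intro a b hab
    exact congrArg Prod.snd hab
  have eΓ : (∑ᶠ p : ℕ × ℕ, cc p * (pderiv (v p.1) f * pderiv (v p.2) g))
      = pderiv (v 1) f * (wt g - X (v 0) * del g) := by
    rw [e, ← finsum_mem_univ, finsum_mem_inter_support_eq _ Set.univ
        (Set.range fun l : ℕ => ((1 : ℕ), l))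
        (by rw [Set.univ_inter, Set.inter_eq_right.mpr hG]),
      finsum_mem_range einj]
    simp only [if_true]
    rw [← mul_finsum _ _, key]
  rw [Del_mul, eΓ]
  ring
end

section
/- The operators D = q d/dq, 𝔡 = 12 ∂/∂P, and W (the weight operator) on the ring of quasimodular forms M̃ = Q[P, Q, R] form an sl_2-triple: [W, D] = 2D, [W, 𝔡] = -2𝔡, and [𝔡, D] = W. -/
open MvPolynomial

/-- The ring of quasimodular forms `M̃ = ℚ[P, Q, R]`, with `P = X 0`, `Q = X 1`, `R = X 2`. -/
noncomputable abbrev QM : Type := MvPolynomial (Fin 3) ℚ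

/-- The derivation `D = q d/dq`, acting via the Ramanujan identities
`D(P) = (P²-Q)/12`, `D(Q) = (PQ-R)/3`, `D(R) = (PR-Q²)/2`. -/
noncomputable def Dop : Derivation ℚ QM QM :=
  mkDerivation ℚ ![(1 / 12 : ℚ) • (X 0 ^ 2 - X 1), (1 / 3 : ℚ) • (X 0 * X 1 - X 2),
    (1 / 2 : ℚ) • (X 0 * X 2 - X 1 ^ 2)]

/-- The operator `𝔡 = 12 ∂/∂P`. -/
noncomputable def dop (f : QM) : QM := (12 : ℚ) • pderiv (0 : Fin 3) f

/-- The weight operator `W`, the derivation multiplying a weight-homogeneous element of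
weight `k` by `k`, where `P, Q, R` have weights `2, 4, 6`. -/
noncomputable def Wop : Derivation ℚ QM QM :=
  mkDerivation ℚ ![(2 : ℚ) • X 0, (4 : ℚ) • X 1, (6 : ℚ) • X 2]

noncomputable def dopD : Derivation ℚ QM QM := (12 : ℚ) • pderiv (0 : Fin 3)

lemma dop_eq (f : QM) : dop f = dopD f := rfl

lemma brack1 : ⁅Wop, Dop⁆ = 2 • Dop := by
  apply derivation_ext
  intro i
  fin_cases i <;>
  · apply MvPolynomial.funext
    intro x
    simp [Derivation.commutator_apply, Dop, Wop, mkDerivation_X, Derivation.leibniz,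
      smul_sub, pderiv_X, smul_eval]
    ring

lemma brack2 : ⁅Wop, dopD⁆ = -(2 • dopD) := by
  apply derivation_ext
  intro i
  fin_cases i <;>
  · apply MvPolynomial.funext
    intro x
    simp [Derivation.commutator_apply, dopD, Wop, mkDerivation_X, Derivation.leibniz,
      smul_sub, pderiv_X, smul_eval]
    try ring

lemma brack3 : ⁅dopD, Dop⁆ = Wop := by
  apply derivation_ext
  intro i
  fin_cases i <;>
  · apply MvPolynomial.funext
    intro x
    simp [Derivation.commutator_apply, dopD, Dop, Wop, mkDerivation_X, Derivation.leibniz,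
      smul_sub, pderiv_X, smul_eval]
    try ring

theorem stmt_13 :
    (∀ f : QM, Wop (Dop f) - Dop (Wop f) = 2 • Dop f)
    ∧ (∀ f : QM, Wop (dop f) - dop (Wop f) = -(2 • dop f))
    ∧ (∀ f : QM, dop (Dop f) - Dop (dop f) = Wop f) := by
  refine ⟨fun f => ?_, fun f => ?_, fun f => ?_⟩
  · have := congrArg (fun D : Derivation ℚ QM QM => D f) brack1
    simpa [Derivation.commutator_apply] using this
  · have := congrArg (fun D : Derivation ℚ QM QM => D f) brack2
    simpa [Derivation.commutator_apply, dop_eq] using this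
  · have := congrArg (fun D : Derivation ℚ QM QM => D f) brack3
    simpa [Derivation.commutator_apply, dop_eq] using this
end

section
/- Let D be the derivation on Q[P, Q, R] with D(P) = (P²-Q)/12, D(Q) = (PQ-R)/3, D(R) = (PR-Q²)/2, and let D̂ = D - (1/24)P (where P denotes multiplication by P). Then for nonnegative integers a, b, c, the coefficient of P^{a+1}Q^bR^c in D̂(P^aQ^bR^c) equals a/12 + b/3 + c/2 - 1/24, which is nonzero; consequently, if f ∈ Q[P,Q,R] has degree exactly r as a polynomial in P, then D̂f has degree exactly r+1 in P. -/
open MvPolynomial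

/-- The operator `D̂ = D - (1/24)P`. -/
noncomputable def Dhat (f : QM) : QM := Dop f - (1 / 24 : ℚ) • (X 0 * f)

lemma Dhat_monomial (d : Fin 3 →₀ ℕ) :
    Dhat (monomial d 1) =
      monomial (d - Finsupp.single 0 1 + Finsupp.single 0 2) ((d 0 : ℚ)/12)
      - monomial (d - Finsupp.single 0 1 + Finsupp.single 1 1) ((d 0 : ℚ)/12)
      + (monomial (d - Finsupp.single 1 1 + (Finsupp.single 0 1 + Finsupp.single 1 1)) ((d 1 : ℚ)/3)
      - monomial (d - Finsupp.single 1 1 + Finsupp.single 2 1) ((d 1 : ℚ)/3))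
      + (monomial (d - Finsupp.single 2 1 + (Finsupp.single 0 1 + Finsupp.single 2 1)) ((d 2 : ℚ)/2)
      - monomial (d - Finsupp.single 2 1 + Finsupp.single 1 2) ((d 2 : ℚ)/2))
      - monomial (Finsupp.single 0 1 + d) (1/24 : ℚ) := by
  have key : Dop (monomial d 1) =
      ∑ i : Fin 3, monomial (d - Finsupp.single i 1) ((d i : ℚ)) *
        (![(1 / 12 : ℚ) • (X 0 ^ 2 - X 1), (1 / 3 : ℚ) • (X 0 * X 1 - X 2),
          (1 / 2 : ℚ) • (X 0 * X 2 - X 1 ^ 2)] i) := by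
    rw [Dop, mkDerivation_monomial, one_smul, Finsupp.sum_fintype]
    · simp [smul_eq_C_mul, C_mul_monomial]
    · intro i; simp
  rw [Dhat, key, Fin.sum_univ_three]
  simp only [Matrix.cons_val_zero, Matrix.cons_val_one, Matrix.head_cons, Matrix.cons_val_two,
    Matrix.tail_cons]
  rw [show (X 0 ^ 2 : QM) = monomial (Finsupp.single 0 2) 1 from X_pow_eq_monomial,
    show (X 1 ^ 2 : QM) = monomial (Finsupp.single 1 2) 1 from X_pow_eq_monomial]
  simp only [smul_sub, mul_sub, mul_smul_comm, X, monomial_mul, mul_one, one_mul,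
    smul_monomial, smul_eq_mul]
  ring_nf

lemma coeff_Dhat_monomial (d e : Fin 3 →₀ ℕ) (h : d 0 + 1 ≤ e 0) :
    coeff e (Dhat (monomial d 1)) =
      if d + Finsupp.single 0 1 = e then
        (d 0 : ℚ)/12 + (d 1 : ℚ)/3 + (d 2 : ℚ)/2 - 1/24 else 0 := by
  rw [Dhat_monomial]
  simp only [coeff_add, coeff_sub, coeff_monomial]
  have hne : ∀ u : Fin 3 →₀ ℕ, u 0 ≤ d 0 → (¬ u = e) := by
    intro u hu heq; subst heq; omega
  have n2 : ¬ (d - Finsupp.single 0 1 + Finsupp.single 1 1 = e) :=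
    hne _ (by simp [Finsupp.tsub_apply, Finsupp.single_apply])
  have n4 : ¬ (d - Finsupp.single 1 1 + Finsupp.single 2 1 = e) :=
    hne _ (by simp [Finsupp.tsub_apply, Finsupp.single_apply])
  have n6 : ¬ (d - Finsupp.single 2 1 + Finsupp.single 1 2 = e) :=
    hne _ (by simp [Finsupp.tsub_apply, Finsupp.single_apply])
  rw [if_neg n2, if_neg n4, if_neg n6]
  have h1 : (if (d - Finsupp.single 0 1 + Finsupp.single 0 2) = e then (d 0 : ℚ)/12 else 0)
      = (if d + Finsupp.single 0 1 = e then (d 0 : ℚ)/12 else 0) := by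
    rcases Nat.eq_zero_or_pos (d 0) with h0 | h0
    · simp [h0]
    · have : d - Finsupp.single 0 1 + Finsupp.single 0 2 = d + Finsupp.single 0 1 := by
        ext i; fin_cases i <;>
          simp [Finsupp.tsub_apply, Finsupp.single_apply] <;> omega
      rw [this]
  have h2 : (if (d - Finsupp.single 1 1 + (Finsupp.single 0 1 + Finsupp.single 1 1)) = e
        then (d 1 : ℚ)/3 else 0)
      = (if d + Finsupp.single 0 1 = e then (d 1 : ℚ)/3 else 0) := by
    rcases Nat.eq_zero_or_pos (d 1) with h0 | h0
    · simp [h0]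
    · have : d - Finsupp.single 1 1 + (Finsupp.single 0 1 + Finsupp.single 1 1)
          = d + Finsupp.single 0 1 := by
        ext i; fin_cases i <;>
          simp [Finsupp.tsub_apply, Finsupp.single_apply] <;> omega
      rw [this]
  have h3 : (if (d - Finsupp.single 2 1 + (Finsupp.single 0 1 + Finsupp.single 2 1)) = e
        then (d 2 : ℚ)/2 else 0)
      = (if d + Finsupp.single 0 1 = e then (d 2 : ℚ)/2 else 0) := by
    rcases Nat.eq_zero_or_pos (d 2) with h0 | h0
    · simp [h0]
    · have : d - Finsupp.single 2 1 + (Finsupp.single 0 1 + Finsupp.single 2 1)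
          = d + Finsupp.single 0 1 := by
        ext i; fin_cases i <;>
          simp [Finsupp.tsub_apply, Finsupp.single_apply] <;> omega
      rw [this]
  rw [h1, h2, h3, show Finsupp.single (0 : Fin 3) 1 + d = d + Finsupp.single 0 1 from
    add_comm _ _]
  split_ifs <;> ring

noncomputable def alp (d : Fin 3 →₀ ℕ) : ℚ := (d 0 : ℚ)/12 + (d 1 : ℚ)/3 + (d 2 : ℚ)/2 - 1/24

lemma alp_ne (d : Fin 3 →₀ ℕ) : alp d ≠ 0 := by
  intro h
  rw [alp] at h
  have h2 : ((2*(d 0)+8*(d 1)+12*(d 2) : ℕ) : ℚ) = ((1:ℕ):ℚ) := by push_cast; linarith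
  have := Nat.cast_inj (R := ℚ).mp h2
  omega

lemma Dhat_smul (c : ℚ) (f : QM) : Dhat (c • f) = c • Dhat f := by
  simp [Dhat, smul_sub, mul_smul_comm, smul_comm c]

lemma Dhat_sum {ι : Type*} (s : Finset ι) (g : ι → QM) :
    Dhat (∑ i ∈ s, g i) = ∑ i ∈ s, Dhat (g i) := by
  simp [Dhat, Finset.mul_sum, Finset.smul_sum, Finset.sum_sub_distrib]

lemma coeff_Dhat (f : QM) (e : Fin 3 →₀ ℕ) (hf : ∀ d ∈ f.support, d 0 + 1 ≤ e 0) :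
    coeff e (Dhat f) =
      ∑ d ∈ f.support, coeff d f * (if d + Finsupp.single 0 1 = e then alp d else 0) := by
  conv_lhs => rw [f.as_sum]
  have : ∀ d ∈ f.support, monomial d (coeff d f) = coeff d f • monomial d 1 := by
    intro d _; rw [smul_monomial, smul_eq_mul, mul_one]
  rw [Finset.sum_congr rfl this, Dhat_sum, coeff_sum]
  refine Finset.sum_congr rfl fun d hd => ?_
  rw [Dhat_smul, coeff_smul, coeff_Dhat_monomial d e (hf d hd), smul_eq_mul, alp]

example : True := trivial

lemma main1 (a b c : ℕ) :
    coeff (Finsupp.single 0 (a + 1) + Finsupp.single 1 b + Finsupp.single 2 c)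
        (Dhat (X 0 ^ a * X 1 ^ b * X 2 ^ c)) =
      (a : ℚ) / 12 + (b : ℚ) / 3 + (c : ℚ) / 2 - 1 / 24 := by
  have hm : (X 0 ^ a * X 1 ^ b * X 2 ^ c : QM) =
      monomial (Finsupp.single 0 a + Finsupp.single 1 b + Finsupp.single 2 c) 1 := by
    simp [X_pow_eq_monomial, monomial_mul]
  have hcond : (Finsupp.single (0:Fin 3) a + Finsupp.single 1 b + Finsupp.single 2 c)
      + Finsupp.single 0 1 = Finsupp.single 0 (a+1) + Finsupp.single 1 b + Finsupp.single 2 c := by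
    ext i; fin_cases i <;> simp [Finsupp.single_apply]
  rw [hm, coeff_Dhat_monomial _ _ (by simp), if_pos hcond]
  simp

theorem stmt_14 :
    (∀ a b c : ℕ,
      coeff (Finsupp.single 0 (a + 1) + Finsupp.single 1 b + Finsupp.single 2 c)
          (Dhat (X 0 ^ a * X 1 ^ b * X 2 ^ c)) =
        (a : ℚ) / 12 + (b : ℚ) / 3 + (c : ℚ) / 2 - 1 / 24)
    ∧ (∀ a b c : ℕ,
      coeff (Finsupp.single 0 (a + 1) + Finsupp.single 1 b + Finsupp.single 2 c)
          (Dhat (X 0 ^ a * X 1 ^ b * X 2 ^ c)) ≠ 0)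
    ∧ (∀ f : QM, ∀ r : ℕ, f ≠ 0 → degreeOf 0 f = r → degreeOf 0 (Dhat f) = r + 1) := by
  refine ⟨main1, fun a b c => ?_, ?_⟩
  · rw [main1]
    have h := alp_ne (Finsupp.single 0 a + Finsupp.single 1 b + Finsupp.single 2 c)
    rw [alp] at h
    simpa using h
  · intro f r hf hdeg
    have hsupp : ∀ d ∈ f.support, d 0 ≤ r := by
      intro d hd
      have := Finset.le_sup (f := fun m : Fin 3 →₀ ℕ => m 0) hd
      rwa [← degreeOf_eq_sup, hdeg] at this
    obtain ⟨d₀, hd₀s, hd₀⟩ : ∃ d₀ ∈ f.support, d₀ 0 = r := by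
      have hne : f.support.Nonempty := Finset.nonempty_iff_ne_empty.mpr (fun h => hf (MvPolynomial.support_eq_empty.mp h))
      obtain ⟨b, hb, hsup⟩ := Finset.exists_mem_eq_sup f.support hne (fun m : Fin 3 →₀ ℕ => m 0)
      exact ⟨b, hb, by rw [← hsup, ← degreeOf_eq_sup, hdeg]⟩
    set e := d₀ + Finsupp.single 0 1 with he
    have he0 : e 0 = r + 1 := by simp [he, hd₀]
    have hcoeff : coeff e (Dhat f) = coeff d₀ f * alp d₀ := by
      rw [coeff_Dhat f e (fun d hd => by have := hsupp d hd; omega)]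
      have hterm : ∀ d ∈ f.support,
          (coeff d f * (if d + Finsupp.single 0 1 = e then alp d else 0))
            = if d = d₀ then coeff d f * alp d else 0 := by
        intro d hd
        by_cases hdd : d = d₀
        · subst hdd; simp [he]
        · rw [if_neg (fun heq => hdd (add_right_cancel (heq.trans he))), if_neg hdd, mul_zero]
      rw [Finset.sum_congr rfl hterm, Finset.sum_ite_eq' f.support d₀ _, if_pos hd₀s]
    have hne0 : coeff e (Dhat f) ≠ 0 := by
      rw [hcoeff]; exact mul_ne_zero (mem_support_iff.mp hd₀s) (alp_ne d₀)
    have hub : degreeOf 0 (Dhat f) ≤ r + 1 := by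
      rw [degreeOf_le_iff]
      intro m hm
      by_contra hcon
      push_neg at hcon
      apply mem_support_iff.mp hm
      rw [coeff_Dhat f m (fun d hd => by have := hsupp d hd; omega)]
      refine Finset.sum_eq_zero fun d hd => ?_
      rw [if_neg, mul_zero]
      intro heq
      have hm0 : m 0 = d 0 + 1 := by
        rw [← heq]; simp
      have := hsupp d hd; omega
    have hlb : r + 1 ≤ degreeOf 0 (Dhat f) := by
      have hmem : e ∈ (Dhat f).support := mem_support_iff.mpr hne0
      have h2 : e 0 ≤ degreeOf 0 (Dhat f) := by
        rw [degreeOf_eq_sup]; exact Finset.le_sup (f := fun m : Fin 3 →₀ ℕ => m 0) hmem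
      omega
    omega
end
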